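/- In the Hamilton algebra Ha(N) with basis {J_ij, G_k, F_k, R} (1 ≤ i < j ≤ N, 1 ≤ k ≤ N) and brackets [J_ij,J_kl] = δ_il J_jk + δ_jk J_il − δ_jl J_ik − δ_ik J_jl, [G_i,F_j] = δ_ij R, [J_ij,G_k] = −δ_ik G_j + δ_jk G_i, [J_ij,F_k] = −δ_ik F_j + δ_jk F_i, all other brackets zero, the elements J_ij' := J_ij R + G_i F_j − G_j F_i of the universal enveloping algebra satisfy [J_ij', G_k] = 0, [J_ij', F_k] = 0, and [J_ij', R] = 0 for all i, j, k. -/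

import Mathlib

open UniversalEnvelopingAlgebra

/-- Kronecker delta with values in a field `k`. -/
def kdelta (k : Type*) [Field k] {N : ℕ} (a b : Fin N) : k := if a = b then 1 else 0

lemma mulLie {A : Type*} [Ring A] (a b c : A) : ⁅a * b, c⁆ = a * ⁅b, c⁆ + ⁅a, c⁆ * b := by
  simp only [Ring.lie_def]; noncomm_ring

lemma kdelta_comm (k : Type*) [Field k] {N : ℕ} (a b : Fin N) :
    kdelta k a b = kdelta k b a := by
  simp [kdelta, eq_comm]

/-- In the Hamilton algebra `Ha(N) = so(N) ⋉ h_N`, the elements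
`J'_ij = J_ij R + G_i F_j − G_j F_i` of `U(Ha(N))` commute with all the generators
`G_k`, `F_k`, `R` of the Heisenberg radical. -/

theorem hamilton_virtual_copy_commutes_radical
    (k : Type*) [Field k] (g : Type*) [LieRing g] [LieAlgebra k g] (N : ℕ)
    (J : Fin N → Fin N → g) (G F : Fin N → g) (R : g)
    (hJJ : ∀ i j l m, ⁅J i j, J l m⁆ =
      kdelta k i m • J j l + kdelta k j l • J i m - kdelta k j m • J i l - kdelta k i l • J j m)
    (hGF : ∀ i j, ⁅G i, F j⁆ = kdelta k i j • R)
    (hJG : ∀ i j l, ⁅J i j, G l⁆ = -(kdelta k i l • G j) + kdelta k j l • G i)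
    (hJF : ∀ i j l, ⁅J i j, F l⁆ = -(kdelta k i l • F j) + kdelta k j l • F i)
    (hGG : ∀ i j, ⁅G i, G j⁆ = 0) (hFF : ∀ i j, ⁅F i, F j⁆ = 0)
    (hJR : ∀ i j, ⁅J i j, R⁆ = 0) (hGR : ∀ i, ⁅G i, R⁆ = 0) (hFR : ∀ i, ⁅F i, R⁆ = 0) :
    ∀ i j l,
      (⁅(ι k (J i j) : UniversalEnvelopingAlgebra k g) * ι k R
          + ι k (G i) * ι k (F j) - ι k (G j) * ι k (F i), ι k (G l)⁆ = 0)
      ∧ (⁅(ι k (J i j) : UniversalEnvelopingAlgebra k g) * ι k R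
          + ι k (G i) * ι k (F j) - ι k (G j) * ι k (F i), ι k (F l)⁆ = 0)
      ∧ (⁅(ι k (J i j) : UniversalEnvelopingAlgebra k g) * ι k R
          + ι k (G i) * ι k (F j) - ι k (G j) * ι k (F i), ι k R⁆ = 0) := by
  intro i j l
  letI : LieRing (UniversalEnvelopingAlgebra k g) := LieRing.ofAssociativeRing
  letI : LieAlgebra k (UniversalEnvelopingAlgebra k g) := LieAlgebra.ofAssociativeAlgebra
  have key : ∀ x y : g, ⁅(ι k x : UniversalEnvelopingAlgebra k g), ι k y⁆ = ι k ⁅x, y⁆ :=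
    fun x y => (LieHom.map_lie (ι k) x y).symm
  have hRG : ∀ a, ⁅R, G a⁆ = 0 := fun a => by
    rw [← lie_skew, hGR, neg_zero]
  have hRF : ∀ a, ⁅R, F a⁆ = 0 := fun a => by
    rw [← lie_skew, hFR, neg_zero]
  have hFG : ∀ a b, ⁅F a, G b⁆ = -(kdelta k b a • R) := fun a b => by
    rw [← lie_skew, hGF]
  have bJG : ∀ a, ⁅(ι k (J i j) : UniversalEnvelopingAlgebra k g), ι k (G a)⁆
      = -(kdelta k i a • ι k (G j)) + kdelta k j a • ι k (G i) := fun a => by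
    rw [key, hJG, map_add, map_neg, map_smul, map_smul]
  have bJF : ∀ a, ⁅(ι k (J i j) : UniversalEnvelopingAlgebra k g), ι k (F a)⁆
      = -(kdelta k i a • ι k (F j)) + kdelta k j a • ι k (F i) := fun a => by
    rw [key, hJF, map_add, map_neg, map_smul, map_smul]
  have bJR : ⁅(ι k (J i j) : UniversalEnvelopingAlgebra k g), ι k R⁆ = 0 := by
    rw [key, hJR, map_zero]
  have bGF : ∀ a b, ⁅(ι k (G a) : UniversalEnvelopingAlgebra k g), ι k (F b)⁆
      = kdelta k a b • ι k R := fun a b => by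
    rw [key, hGF, map_smul]
  have bFG : ∀ a b, ⁅(ι k (F a) : UniversalEnvelopingAlgebra k g), ι k (G b)⁆
      = -(kdelta k b a • ι k R) := fun a b => by
    rw [key, hFG, map_neg, map_smul]
  have bGG : ∀ a b, ⁅(ι k (G a) : UniversalEnvelopingAlgebra k g), ι k (G b)⁆ = 0 := fun a b => by
    rw [key, hGG, map_zero]
  have bFF : ∀ a b, ⁅(ι k (F a) : UniversalEnvelopingAlgebra k g), ι k (F b)⁆ = 0 := fun a b => by
    rw [key, hFF, map_zero]
  have bGR : ∀ a, ⁅(ι k (G a) : UniversalEnvelopingAlgebra k g), ι k R⁆ = 0 := fun a => by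
    rw [key, hGR, map_zero]
  have bFR : ∀ a, ⁅(ι k (F a) : UniversalEnvelopingAlgebra k g), ι k R⁆ = 0 := fun a => by
    rw [key, hFR, map_zero]
  have bRG : ∀ a, ⁅(ι k R : UniversalEnvelopingAlgebra k g), ι k (G a)⁆ = 0 := fun a => by
    rw [key, hRG, map_zero]
  have bRF : ∀ a, ⁅(ι k R : UniversalEnvelopingAlgebra k g), ι k (F a)⁆ = 0 := fun a => by
    rw [key, hRF, map_zero]
  have cRF : ∀ a, (ι k R : UniversalEnvelopingAlgebra k g) * ι k (F a)
      = ι k (F a) * ι k R := fun a => by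
    have h := bFR a
    rw [Ring.lie_def, sub_eq_zero] at h
    exact h.symm
  refine ⟨?_, ?_, ?_⟩ <;>
  · rw [sub_lie, add_lie, mulLie, mulLie, mulLie]
    simp only [bJG, bJF, bJR, bGF, bFG, bGG, bFF, bGR, bFR, bRG, bRF, lie_self]
    simp only [mul_zero, zero_mul, add_mul, neg_mul, mul_neg, mul_smul_comm,
      smul_mul_assoc, neg_neg, smul_neg, add_zero, zero_add, sub_zero,
      kdelta_comm k l j, kdelta_comm k l i, cRF]
    try abel
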